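/- Fix p ∈ (0,1), let {X_v}_{v∈ℕ²} be i.i.d. Bernoulli(p) site marks, and let L(m,n) be the maximal cardinality of a strictly increasing path of marked sites in [m]×[n]. Then n⁻¹ L(⌊p⁻¹n⌋, n) → 1 almost surely as n → ∞; that is, in the rectangle [⌊p⁻¹n⌋]×[n] there is with probability one a strictly increasing path collecting n − o(n) marked sites. -/

import Mathlib

open MeasureTheory ProbabilityTheory Filter

noncomputable def LIP (marked : ℕ × ℕ → Prop) (m n : ℕ) : ℕ :=
  sSup {k : ℕ | ∃ f : Fin k → ℕ × ℕ,
    (∀ i, 1 ≤ (f i).1 ∧ (f i).1 ≤ m ∧ 1 ≤ (f i).2 ∧ (f i).2 ≤ n ∧ marked (f i)) ∧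
    ∀ i j : Fin k, i < j → (f i).1 < (f j).1 ∧ (f i).2 < (f j).2}

namespace SoftEdge

/-- The row pointer of the greedy scan after `t` trials. -/
def Jgr (marks : ℕ × ℕ → Bool) : ℕ → ℕ
  | 0 => 1
  | t+1 => Jgr marks t + (if marks (t+1, Jgr marks t) = true then 1 else 0)

/-- The bit examined at trial `t` (column `t+1`). -/
def Bgr (marks : ℕ × ℕ → Bool) (t : ℕ) : Bool := marks (t+1, Jgr marks t)

lemma Jgr_pos (marks : ℕ × ℕ → Bool) (t : ℕ) : 1 ≤ Jgr marks t := by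
  induction t with
  | zero => simp [Jgr]
  | succ t ih => rw [Jgr]; omega

lemma Jgr_le (marks : ℕ × ℕ → Bool) (t : ℕ) : Jgr marks t ≤ t + 1 := by
  induction t with
  | zero => simp [Jgr]
  | succ t ih => rw [Jgr]; split <;> omega

lemma Jgr_congr (marks marks' : ℕ × ℕ → Bool) :
    ∀ t, (∀ c r, 1 ≤ c → c ≤ t → 1 ≤ r → r ≤ t → marks (c, r) = marks' (c, r)) →
      Jgr marks t = Jgr marks' t := by
  intro t
  induction t with
  | zero => intro _; rfl
  | succ t ih =>
    intro h
    have hJ : Jgr marks t = Jgr marks' t :=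
      ih fun c r h1 h2 h3 h4 => h c r h1 (h2.trans (Nat.le_succ t)) h3 (h4.trans (Nat.le_succ t))
    rw [Jgr, Jgr, hJ, h (t+1) (Jgr marks' t) (by omega) le_rfl (Jgr_pos _ _) (Jgr_le _ _)]

lemma Bgr_congr (marks marks' : ℕ × ℕ → Bool) (t : ℕ)
    (h : ∀ c r, 1 ≤ c → c ≤ t + 1 → 1 ≤ r → r ≤ t + 1 → marks (c, r) = marks' (c, r)) :
    Bgr marks t = Bgr marks' t := by
  have hJ : Jgr marks t = Jgr marks' t :=
    Jgr_congr _ _ t fun c r h1 h2 h3 h4 => h c r h1 (h2.trans (Nat.le_succ t)) h3 (h4.trans (Nat.le_succ t))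
  rw [Bgr, Bgr, hJ, h (t+1) (Jgr marks' t) (by omega) le_rfl (Jgr_pos _ _) (Jgr_le _ _)]

lemma Jgr_count (marks : ℕ × ℕ → Bool) (t : ℕ) :
    Jgr marks t = 1 + ((Finset.range t).filter (fun c => Bgr marks c = true)).card := by
  induction t with
  | zero => simp [Jgr]
  | succ t ih =>
    rw [Jgr, Finset.range_add_one, Finset.filter_insert]
    by_cases h : Bgr marks t = true
    · rw [if_pos h, Finset.card_insert_of_notMem (by simp),
        if_pos (show marks (t+1, Jgr marks t) = true from h)]
      omega
    · rw [if_neg h, if_neg (show ¬ marks (t+1, Jgr marks t) = true from h)]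
      omega

/-- Every element of the defining set of `LIP` is at most `n`. -/
lemma mem_le (marks : ℕ × ℕ → Prop) (m n k : ℕ)
    (hk : k ∈ {k : ℕ | ∃ f : Fin k → ℕ × ℕ,
      (∀ i, 1 ≤ (f i).1 ∧ (f i).1 ≤ m ∧ 1 ≤ (f i).2 ∧ (f i).2 ≤ n ∧ marks (f i)) ∧
      ∀ i j : Fin k, i < j → (f i).1 < (f j).1 ∧ (f i).2 < (f j).2}) : k ≤ n := by
  obtain ⟨f, hf, hmono⟩ := hk
  have key : ∀ a : ℕ, ∀ h : a < k, a + 1 ≤ (f ⟨a, h⟩).2 := by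
    intro a
    induction a with
    | zero => intro h; exact (hf ⟨0, h⟩).2.2.1
    | succ a ihh =>
      intro h
      have h' : a < k := Nat.lt_of_succ_lt h
      have h2 := (hmono ⟨a, h'⟩ ⟨a+1, h⟩ (by simp [Fin.lt_def])).2
      have := ihh h'
      omega
  rcases Nat.eq_zero_or_pos k with hk0 | hk0
  · omega
  · have h' : k - 1 < k := by omega
    have := key (k-1) h'
    have := (hf ⟨k-1, h'⟩).2.2.2.1
    omega

lemma zero_mem (marks : ℕ × ℕ → Prop) (m n : ℕ) :
    (0 : ℕ) ∈ {k : ℕ | ∃ f : Fin k → ℕ × ℕ,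
      (∀ i, 1 ≤ (f i).1 ∧ (f i).1 ≤ m ∧ 1 ≤ (f i).2 ∧ (f i).2 ≤ n ∧ marks (f i)) ∧
      ∀ i j : Fin k, i < j → (f i).1 < (f j).1 ∧ (f i).2 < (f j).2} :=
  ⟨Fin.elim0, fun i => i.elim0, fun i _ _ => i.elim0⟩

lemma LIP_le (marks : ℕ × ℕ → Prop) (m n : ℕ) : LIP marks m n ≤ n :=
  csSup_le ⟨0, zero_mem marks m n⟩ (fun k hk => mem_le marks m n k hk)

lemma le_LIP (marks : ℕ × ℕ → Prop) (m n k : ℕ)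
    (hk : k ∈ {k : ℕ | ∃ f : Fin k → ℕ × ℕ,
      (∀ i, 1 ≤ (f i).1 ∧ (f i).1 ≤ m ∧ 1 ≤ (f i).2 ∧ (f i).2 ≤ n ∧ marks (f i)) ∧
      ∀ i j : Fin k, i < j → (f i).1 < (f j).1 ∧ (f i).2 < (f j).2}) :
    k ≤ LIP marks m n :=
  le_csSup ⟨n, fun x hx => mem_le marks m n x hx⟩ hk

/-- The greedy path witnesses `min n (number of successes in M trials) ≤ LIP`. -/
lemma greedy_path (marks : ℕ × ℕ → Bool) (M n : ℕ) :
    min n (((Finset.range M).filter (fun t => Bgr marks t = true)).card)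
      ≤ LIP (fun v => marks v = true) M n := by
  classical
  set c := ((Finset.range M).filter (fun t => Bgr marks t = true)).card with hc
  set k := min n c with hkdef
  set P : ℕ → Prop := fun t => Bgr marks t = true ∧ t < M with hP
  have hPfin : (Set.ofPred P).Finite :=
    Set.Finite.subset (Set.finite_Iio M) (fun t ht => ht.2)
  have hcard : ∀ hf : (Set.ofPred P).Finite, hf.toFinset.card = c := by
    intro hf
    rw [hc]
    congr 1
    ext t
    simp only [Set.Finite.mem_toFinset, Set.mem_setOf_eq, Finset.mem_filter, Finset.mem_range, hP]
    tauto
  apply le_LIP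
  refine ⟨fun i => (Nat.nth P i + 1, Jgr marks (Nat.nth P i)), ?_, ?_⟩
  · intro i
    have hik : (i : ℕ) < k := i.isLt
    have hic : (i : ℕ) < hPfin.toFinset.card := by rw [hcard hPfin]; omega
    have hPi : P (Nat.nth P i) := Nat.nth_mem_of_lt_card hPfin hic
    have hrow : Jgr marks (Nat.nth P i) = (i : ℕ) + 1 := by
      rw [Jgr_count]
      have hcount : Nat.count P (Nat.nth P i) = (i : ℕ) :=
        Nat.count_nth (fun hf => by rw [hcard hf]; omega)
      rw [Nat.count_eq_card_filter_range] at hcount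
      have hfeq : (Finset.range (Nat.nth P i)).filter P
          = (Finset.range (Nat.nth P i)).filter (fun t => Bgr marks t = true) := by
        apply Finset.filter_congr
        intro t ht
        simp only [Finset.mem_range] at ht
        have : t < M := lt_trans ht hPi.2
        simp [hP, this]
      rw [hfeq] at hcount
      omega
    have hin : (i : ℕ) < n := lt_of_lt_of_le hik (min_le_left _ _)
    have hiM : Nat.nth P (i : ℕ) < M := hPi.2
    refine ⟨Nat.le_add_left 1 _, hiM, ?_, ?_, hPi.1⟩
    · show 1 ≤ Jgr marks (Nat.nth P (i : ℕ))
      rw [hrow]; omega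
    · show Jgr marks (Nat.nth P (i : ℕ)) ≤ n
      rw [hrow]; omega
  · intro i j hij
    have hic : (i : ℕ) < hPfin.toFinset.card := by rw [hcard hPfin]; have := i.isLt; omega
    have hjc : (j : ℕ) < hPfin.toFinset.card := by rw [hcard hPfin]; have := j.isLt; omega
    have hnth : Nat.nth P i < Nat.nth P j :=
      Nat.nth_lt_nth_of_lt_card hPfin hij hjc
    constructor
    · show Nat.nth P (i : ℕ) + 1 < Nat.nth P (j : ℕ) + 1
      omega
    · show Jgr marks (Nat.nth P (i : ℕ)) < Jgr marks (Nat.nth P (j : ℕ))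
      have hri : Jgr marks (Nat.nth P i) = (i : ℕ) + 1 := by
        rw [Jgr_count]
        have hcount : Nat.count P (Nat.nth P i) = (i : ℕ) :=
          Nat.count_nth (fun hf => by rw [hcard hf]; have := i.isLt; omega)
        rw [Nat.count_eq_card_filter_range] at hcount
        have hPi : P (Nat.nth P i) := Nat.nth_mem_of_lt_card hPfin hic
        have hfeq : (Finset.range (Nat.nth P i)).filter P
            = (Finset.range (Nat.nth P i)).filter (fun t => Bgr marks t = true) := by
          apply Finset.filter_congr
          intro t ht
          simp only [Finset.mem_range] at ht
          have : t < M := lt_trans ht hPi.2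
          simp [hP, this]
        rw [hfeq] at hcount
        omega
      have hrj : Jgr marks (Nat.nth P j) = (j : ℕ) + 1 := by
        rw [Jgr_count]
        have hcount : Nat.count P (Nat.nth P j) = (j : ℕ) :=
          Nat.count_nth (fun hf => by rw [hcard hf]; have := j.isLt; omega)
        rw [Nat.count_eq_card_filter_range] at hcount
        have hPj : P (Nat.nth P j) := Nat.nth_mem_of_lt_card hPfin hjc
        have hfeq : (Finset.range (Nat.nth P j)).filter P
            = (Finset.range (Nat.nth P j)).filter (fun t => Bgr marks t = true) := by
          apply Finset.filter_congr
          intro t ht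
          simp only [Finset.mem_range] at ht
          have : t < M := lt_trans ht hPj.2
          simp [hP, this]
        rw [hfeq] at hcount
        omega
      rw [hri, hrj]
      have : (i : ℕ) < (j : ℕ) := hij
      omega

section Prob

open scoped Classical

variable {Ω : Type*} [MeasureSpace Ω]

/-- The greedy scan bits as random variables. -/
def BnX (X : ℕ × ℕ → Ω → Bool) (t : ℕ) (ω : Ω) : Bool := Bgr (fun v => X v ω) t

/-- The event that the `t`-th greedy bit is a success. -/
def Ev (X : ℕ × ℕ → Ω → Bool) (t : ℕ) : Set Ω := {ω | BnX X t ω = true}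

/-- Finite window of sites on which the first `t` greedy bits depend. -/
def Dt (t : ℕ) : Finset (ℕ × ℕ) := Finset.Icc 1 t ×ˢ Finset.Icc 1 t

/-- Restriction of the configuration to a window. -/
def restr (X : ℕ × ℕ → Ω → Bool) (t : ℕ) (ω : Ω) : ↥(Dt t) → Bool :=
  fun v => X v.1 ω

/-- Extension of a partial configuration by `false`. -/
def extg (t : ℕ) (g : ↥(Dt t) → Bool) : ℕ × ℕ → Bool :=
  fun v => if h : v ∈ Dt t then g ⟨v, h⟩ else false

lemma agree (X : ℕ × ℕ → Ω → Bool) (t : ℕ) (ω : Ω) (c r : ℕ)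
    (h1 : 1 ≤ c) (h2 : c ≤ t) (h3 : 1 ≤ r) (h4 : r ≤ t) :
    extg t (restr X t ω) (c, r) = X (c, r) ω := by
  have hmem : ((c, r) : ℕ × ℕ) ∈ Dt t :=
    Finset.mem_product.2 ⟨Finset.mem_Icc.2 ⟨h1, h2⟩, Finset.mem_Icc.2 ⟨h3, h4⟩⟩
  simp only [extg, dif_pos hmem]
  rfl

lemma restr_meas (X : ℕ × ℕ → Ω → Bool) (hXmeas : ∀ v, Measurable (X v)) (t : ℕ) :
    Measurable (restr X t) :=
  measurable_pi_lambda _ fun v => hXmeas v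

lemma repJ (X : ℕ × ℕ → Ω → Bool) (t j : ℕ) :
    {ω | Jgr (fun v => X v ω) t = j}
      = restr X t ⁻¹' {g | Jgr (extg t g) t = j} := by
  ext ω
  simp only [Set.mem_setOf_eq, Set.mem_preimage]
  rw [Jgr_congr (fun v => X v ω) (extg t (restr X t ω)) t
    (fun c r h1 h2 h3 h4 => (agree X t ω c r h1 h2 h3 h4).symm)]

lemma repBJ (X : ℕ × ℕ → Ω → Bool) (s t j : ℕ) (hst : s < t) :
    Ev X s ∩ {ω | Jgr (fun v => X v ω) t = j}
      = restr X t ⁻¹' {g | Bgr (extg t g) s = true ∧ Jgr (extg t g) t = j} := by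
  ext ω
  simp only [Ev, BnX, Set.mem_inter_iff, Set.mem_setOf_eq, Set.mem_preimage]
  rw [Jgr_congr (fun v => X v ω) (extg t (restr X t ω)) t
    (fun c r h1 h2 h3 h4 => (agree X t ω c r h1 h2 h3 h4).symm),
    Bgr_congr (fun v => X v ω) (extg t (restr X t ω)) s
    (fun c r h1 h2 h3 h4 => (agree X t ω c r h1 (h2.trans hst) h3 (h4.trans hst)).symm)]

lemma repB (X : ℕ × ℕ → Ω → Bool) (t : ℕ) :
    Ev X t = restr X (t+1) ⁻¹' {g | Bgr (extg (t+1) g) t = true} := by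
  ext ω
  simp only [Ev, BnX, Set.mem_setOf_eq, Set.mem_preimage]
  rw [Bgr_congr (fun v => X v ω) (extg (t+1) (restr X (t+1) ω)) t
    (fun c r h1 h2 h3 h4 => (agree X (t+1) ω c r h1 h2 h3 h4).symm)]

lemma Ev_meas (X : ℕ × ℕ → Ω → Bool) (hXmeas : ∀ v, Measurable (X v)) (t : ℕ) :
    MeasurableSet (Ev X t) := by
  rw [repB]
  exact (restr_meas X hXmeas (t+1)) (Set.to_countable _).measurableSet

lemma BnX_meas (X : ℕ × ℕ → Ω → Bool) (hXmeas : ∀ v, Measurable (X v)) (t : ℕ) :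
    Measurable (BnX X t) := by
  have : BnX X t = (fun g => Bgr (extg (t+1) g) t) ∘ restr X (t+1) := by
    funext ω
    simp only [Function.comp_apply, BnX]
    exact Bgr_congr (fun v => X v ω) (extg (t+1) (restr X (t+1) ω)) t
      (fun c r h1 h2 h3 h4 => (agree X (t+1) ω c r h1 h2 h3 h4).symm)
  rw [this]
  exact (measurable_of_countable _).comp (restr_meas X hXmeas (t+1))

variable [IsProbabilityMeasure (ℙ : Measure Ω)]

lemma key {p : ℝ} (X : ℕ × ℕ → Ω → Bool) (hXmeas : ∀ v, Measurable (X v))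
    (hXindep : iIndepFun X ℙ)
    (hXdist : ∀ v, ℙ {ω | X v ω = true} = ENNReal.ofReal p)
    (t j : ℕ) (Eset : Set (↥(Dt t) → Bool)) :
    ℙ (restr X t ⁻¹' Eset ∩ {ω | X (t+1, j) ω = true})
      = ℙ (restr X t ⁻¹' Eset) * ENNReal.ofReal p := by
  have hw : ((t+1 : ℕ), j) ∉ Dt t := by
    simp only [Dt, Finset.mem_product, Finset.mem_Icc]
    omega
  have hIF : IndepFun (fun ω (v : ↥(Dt t)) => X v.1 ω)
      (fun ω (v : ↥({((t+1:ℕ), j)} : Finset (ℕ × ℕ))) => X v.1 ω) ℙ :=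
    hXindep.indepFun_finset (Dt t) {((t+1:ℕ), j)} (Finset.disjoint_singleton_right.2 hw) hXmeas
  have hIF2 : IndepFun (restr X t) (X ((t+1:ℕ), j)) ℙ :=
    hIF.comp measurable_id
      (measurable_pi_apply (⟨((t+1:ℕ), j), Finset.mem_singleton_self _⟩ :
        ↥({((t+1:ℕ), j)} : Finset (ℕ × ℕ))))
  have h := hIF2.measure_inter_preimage_eq_mul Eset {true}
    (Set.to_countable _).measurableSet (Set.to_countable _).measurableSet
  have hset : X ((t+1:ℕ), j) ⁻¹' {true} = {ω | X ((t+1:ℕ), j) ω = true} := by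
    ext ω; simp
  rw [hset] at h
  rw [h, hXdist]

lemma step {p : ℝ} (X : ℕ × ℕ → Ω → Bool) (hXmeas : ∀ v, Measurable (X v))
    (hXindep : iIndepFun X ℙ)
    (hXdist : ∀ v, ℙ {ω | X v ω = true} = ENNReal.ofReal p)
    (t : ℕ) (A : Set Ω)
    (hA : ∀ j, ∃ Eset : Set (↥(Dt t) → Bool),
      A ∩ {ω | Jgr (fun v => X v ω) t = j} = restr X t ⁻¹' Eset) :
    ℙ (A ∩ Ev X t) = ℙ A * ENNReal.ofReal p := by
  classical
  have hXset : ∀ w : ℕ × ℕ, MeasurableSet {ω | X w ω = true} := by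
    intro w
    have : {ω | X w ω = true} = X w ⁻¹' {true} := by ext; simp
    rw [this]
    exact hXmeas w (Set.to_countable _).measurableSet
  set J : Ω → ℕ := fun ω => Jgr (fun v => X v ω) t with hJ
  have hmeasP : ∀ j : ℕ, MeasurableSet (A ∩ {ω | J ω = j}) := by
    intro j
    obtain ⟨Es, hEs⟩ := hA j
    rw [hJ, hEs]
    exact (restr_meas X hXmeas t) (Set.to_countable _).measurableSet
  have hdisj : (↑(Finset.Icc 1 (t+1)) : Set ℕ).PairwiseDisjoint
      (fun j => (A ∩ {ω | J ω = j}) ∩ {ω | X (t+1, j) ω = true}) := by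
    intro a _ b _ hab
    refine Set.disjoint_left.2 fun ω hωa hωb => hab ?_
    have h1 : J ω = a := hωa.1.2
    have h2 : J ω = b := hωb.1.2
    omega
  have hdisj' : (↑(Finset.Icc 1 (t+1)) : Set ℕ).PairwiseDisjoint
      (fun j => A ∩ {ω | J ω = j}) := by
    intro a _ b _ hab
    refine Set.disjoint_left.2 fun ω hωa hωb => hab ?_
    have h1 : J ω = a := hωa.2
    have h2 : J ω = b := hωb.2
    omega
  have hdecompA : A = ⋃ j ∈ Finset.Icc 1 (t+1), (A ∩ {ω | J ω = j}) := by
    ext ω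
    simp only [Set.mem_iUnion, Finset.mem_Icc, Set.mem_inter_iff, Set.mem_setOf_eq, exists_prop]
    constructor
    · intro hω
      exact ⟨J ω, ⟨Jgr_pos _ _, Jgr_le _ _⟩, hω, rfl⟩
    · rintro ⟨j, _, h, _⟩
      exact h
  have hdecomp : A ∩ Ev X t = ⋃ j ∈ Finset.Icc 1 (t+1),
      ((A ∩ {ω | J ω = j}) ∩ {ω | X (t+1, j) ω = true}) := by
    ext ω
    simp only [Set.mem_iUnion, Finset.mem_Icc, Set.mem_inter_iff, Set.mem_setOf_eq, exists_prop,
      Ev, BnX]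
    constructor
    · rintro ⟨hωA, hωE⟩
      exact ⟨J ω, ⟨Jgr_pos _ _, Jgr_le _ _⟩, ⟨hωA, rfl⟩, hωE⟩
    · rintro ⟨j, _, ⟨hωA, hωJ⟩, hωX⟩
      refine ⟨hωA, ?_⟩
      show (fun v => X v ω) (t+1, Jgr (fun v => X v ω) t) = true
      have : Jgr (fun v => X v ω) t = j := hωJ
      rw [this]
      exact hωX
  rw [hdecomp, measure_biUnion_finset hdisj
    (fun j _ => (hmeasP j).inter (hXset _))]
  have hterm : ∀ j ∈ Finset.Icc 1 (t+1),
      ℙ ((A ∩ {ω | J ω = j}) ∩ {ω | X (t+1, j) ω = true})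
        = ℙ (A ∩ {ω | J ω = j}) * ENNReal.ofReal p := by
    intro j _
    obtain ⟨Es, hEs⟩ := hA j
    rw [hJ, hEs]
    exact key X hXmeas hXindep hXdist t j Es
  rw [Finset.sum_congr rfl hterm, ← Finset.sum_mul,
    ← measure_biUnion_finset hdisj' (fun j _ => hmeasP j), ← hdecompA]

lemma marg {p : ℝ} (X : ℕ × ℕ → Ω → Bool) (hXmeas : ∀ v, Measurable (X v))
    (hXindep : iIndepFun X ℙ)
    (hXdist : ∀ v, ℙ {ω | X v ω = true} = ENNReal.ofReal p) (t : ℕ) :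
    ℙ (Ev X t) = ENNReal.ofReal p := by
  have h := step X hXmeas hXindep hXdist t Set.univ
    (fun j => ⟨{g | Jgr (extg t g) t = j}, by rw [Set.univ_inter]; exact repJ X t j⟩)
  simpa using h

lemma pairmul {p : ℝ} (X : ℕ × ℕ → Ω → Bool) (hXmeas : ∀ v, Measurable (X v))
    (hXindep : iIndepFun X ℙ)
    (hXdist : ∀ v, ℙ {ω | X v ω = true} = ENNReal.ofReal p) {s t : ℕ} (hst : s < t) :
    ℙ (Ev X s ∩ Ev X t) = ENNReal.ofReal p * ENNReal.ofReal p := by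
  have h := step X hXmeas hXindep hXdist t (Ev X s)
    (fun j => ⟨{g | Bgr (extg t g) s = true ∧ Jgr (extg t g) t = j}, repBJ X s t j hst⟩)
  rw [h, marg X hXmeas hXindep hXdist s]

lemma preimage_classify (X : ℕ × ℕ → Ω → Bool) (k : ℕ) (s : Set Bool) :
    BnX X k ⁻¹' s
      = (if true ∈ s then Ev X k else ∅) ∪ (if false ∈ s then (Ev X k)ᶜ else ∅) := by
  classical
  ext ω
  cases hb : BnX X k ω <;> by_cases h1 : true ∈ s <;> by_cases h0 : false ∈ s <;>
    simp [hb, h1, h0, Ev, Set.mem_setOf_eq]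

lemma comap_le (X : ℕ × ℕ → Ω → Bool) (hXmeas : ∀ v, Measurable (X v)) (k : ℕ) :
    MeasurableSpace.comap (BnX X k) (inferInstance : MeasurableSpace Bool)
      ≤ MeasurableSpace.generateFrom {Ev X k} := by
  intro s hs
  obtain ⟨s', -, rfl⟩ := hs
  rw [preimage_classify X k s']
  have hgen : MeasurableSet[MeasurableSpace.generateFrom {Ev X k}] (Ev X k) :=
    MeasurableSpace.measurableSet_generateFrom (Set.mem_singleton _)
  split_ifs with h1 h0 h0
  · rw [Set.union_compl_self]
    exact @MeasurableSet.univ Ω (MeasurableSpace.generateFrom {Ev X k})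
  · rw [Set.union_empty]
    exact hgen
  · rw [Set.empty_union]
    exact hgen.compl
  · rw [Set.union_empty]
    exact @MeasurableSet.empty Ω (MeasurableSpace.generateFrom {Ev X k})

lemma bn_identDistrib {p : ℝ} (X : ℕ × ℕ → Ω → Bool) (hXmeas : ∀ v, Measurable (X v))
    (hXindep : iIndepFun X ℙ)
    (hXdist : ∀ v, ℙ {ω | X v ω = true} = ENNReal.ofReal p) (i : ℕ) :
    IdentDistrib (BnX X i) (BnX X 0) ℙ ℙ := by
  refine ⟨(BnX_meas X hXmeas i).aemeasurable, (BnX_meas X hXmeas 0).aemeasurable, ?_⟩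
  refine Measure.ext fun s hs => ?_
  rw [Measure.map_apply (BnX_meas X hXmeas i) hs, Measure.map_apply (BnX_meas X hXmeas 0) hs,
    preimage_classify, preimage_classify]
  split_ifs with h1 h0 h0
  · rw [Set.union_compl_self, Set.union_compl_self]
  · rw [Set.union_empty, Set.union_empty, marg X hXmeas hXindep hXdist,
      marg X hXmeas hXindep hXdist]
  · rw [Set.empty_union, Set.empty_union, prob_compl_eq_one_sub (Ev_meas X hXmeas i),
      prob_compl_eq_one_sub (Ev_meas X hXmeas 0), marg X hXmeas hXindep hXdist,
      marg X hXmeas hXindep hXdist]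
  · rfl

lemma bn_indepFun {p : ℝ} (X : ℕ × ℕ → Ω → Bool) (hXmeas : ∀ v, Measurable (X v))
    (hXindep : iIndepFun X ℙ)
    (hXdist : ∀ v, ℙ {ω | X v ω = true} = ENNReal.ofReal p) {i j : ℕ} (hij : i < j) :
    IndepFun (BnX X i) (BnX X j) ℙ := by
  have hIS : IndepSet (Ev X i) (Ev X j) ℙ :=
    (indepSet_iff_measure_inter_eq_mul (Ev_meas X hXmeas i) (Ev_meas X hXmeas j) ℙ).2
      (by rw [pairmul X hXmeas hXindep hXdist hij, marg X hXmeas hXindep hXdist,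
        marg X hXmeas hXindep hXdist])
  have hind := (IndepSet_iff_Indep _ _ ℙ).1 hIS
  exact indep_of_indep_of_le_left (indep_of_indep_of_le_right hind (comap_le X hXmeas j))
    (comap_le X hXmeas i)

end Prob

end SoftEdge

/-- Along the soft edge `m = ⌊p⁻¹ n⌋` the trivial bound is attained to first order:
`n⁻¹ L(⌊p⁻¹ n⌋, n) → 1` almost surely. -/
theorem soft_edge_trivial_LLN
    {Ω : Type*} [MeasureSpace Ω] [IsProbabilityMeasure (ℙ : Measure Ω)]
    (p : ℝ) (hp0 : 0 < p) (hp1 : p < 1)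
    (X : ℕ × ℕ → Ω → Bool)
    (hXmeas : ∀ v, Measurable (X v))
    (hXindep : iIndepFun X ℙ)
    (hXdist : ∀ v, ℙ {ω | X v ω = true} = ENNReal.ofReal p) :
    ∀ᵐ ω ∂(ℙ : Measure Ω),
      Tendsto
        (fun (n : ℕ) => ((LIP (fun v => X v ω = true) ⌊p⁻¹ * n⌋₊ n : ℕ) : ℝ) / n)
        atTop (nhds 1) := by
  classical
  set φ : Bool → ℝ := fun b => if b = true then 1 else 0 with hφ
  have hφm : Measurable φ := measurable_of_countable _
  set Y : ℕ → Ω → ℝ := fun t => φ ∘ SoftEdge.BnX X t with hY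
  have hEm : ∀ t, MeasurableSet (SoftEdge.Ev X t) := SoftEdge.Ev_meas X hXmeas
  have hmarg : ∀ t, ℙ (SoftEdge.Ev X t) = ENNReal.ofReal p :=
    SoftEdge.marg X hXmeas hXindep hXdist
  have hYind : ∀ t, Y t = (SoftEdge.Ev X t).indicator (fun _ => (1:ℝ)) := by
    intro t
    funext ω
    by_cases h : SoftEdge.BnX X t ω = true
    · simp [hY, hφ, h, Set.indicator_apply, SoftEdge.Ev, Set.mem_setOf_eq]
    · simp [hY, hφ, h, Set.indicator_apply, SoftEdge.Ev, Set.mem_setOf_eq]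
  have hYint : Integrable (Y 0) ℙ := by
    rw [hYind]
    exact (integrable_const (1:ℝ)).indicator (hEm 0)
  have hYid : ∀ i, IdentDistrib (Y i) (Y 0) ℙ ℙ :=
    fun i => (SoftEdge.bn_identDistrib X hXmeas hXindep hXdist i).comp hφm
  have hYpair : Pairwise (Function.onFun (IndepFun · · (ℙ : Measure Ω)) Y) := by
    intro i j hne
    rcases hne.lt_or_gt with h | h
    · exact (SoftEdge.bn_indepFun X hXmeas hXindep hXdist h).comp hφm hφm
    · exact ((SoftEdge.bn_indepFun X hXmeas hXindep hXdist h).comp hφm hφm).symm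
  have hEY : (ℙ : Measure Ω)[Y 0] = p := by
    rw [hYind 0, integral_indicator_const (1:ℝ) (hEm 0), measureReal_def, hmarg 0, smul_eq_mul, mul_one,
      ENNReal.toReal_ofReal hp0.le]
  have hSL := strong_law_ae_real Y hYint hYpair hYid
  rw [hEY] at hSL
  filter_upwards [hSL] with ω hω
  set cnt : ℕ → ℕ := fun M => ((Finset.range M).filter
    (fun t => SoftEdge.Bgr (fun v => X v ω) t = true)).card with hcnt
  have hsum : ∀ M, (∑ i ∈ Finset.range M, Y i ω) = (cnt M : ℝ) := by
    intro M
    have hterm : ∀ i, Y i ω = if SoftEdge.Bgr (fun v => X v ω) i = true then (1:ℝ) else 0 :=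
      fun i => rfl
    rw [Finset.sum_congr rfl fun i _ => hterm i, Finset.sum_boole]
  have htd : Tendsto (fun M : ℕ => (cnt M : ℝ) / M) atTop (nhds p) := by
    apply hω.congr
    intro M
    rw [hsum]
  have hpinv0 : (0:ℝ) < p⁻¹ := inv_pos.2 hp0
  have hpinv1 : (1:ℝ) ≤ p⁻¹ := by nlinarith [mul_inv_cancel₀ (ne_of_gt hp0)]
  have hMge : ∀ n : ℕ, n ≤ ⌊p⁻¹ * n⌋₊ := by
    intro n
    apply Nat.le_floor
    calc ((n:ℕ):ℝ) = 1 * n := (one_mul _).symm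
    _ ≤ p⁻¹ * n := mul_le_mul_of_nonneg_right hpinv1 (Nat.cast_nonneg n)
  have hMtop : Tendsto (fun n : ℕ => ⌊p⁻¹ * n⌋₊) atTop atTop :=
    tendsto_atTop_mono hMge tendsto_id
  have hcomp : Tendsto (fun n : ℕ => (cnt ⌊p⁻¹ * n⌋₊ : ℝ) / (⌊p⁻¹ * n⌋₊ : ℕ)) atTop (nhds p) :=
    htd.comp hMtop
  have hMdiv : Tendsto (fun n : ℕ => ((⌊p⁻¹ * n⌋₊ : ℕ) : ℝ) / n) atTop (nhds p⁻¹) := by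
    have hlow : Tendsto (fun n : ℕ => p⁻¹ - 1 / (n:ℝ)) atTop (nhds p⁻¹) := by
      simpa using (tendsto_const_nhds (x := p⁻¹)).sub tendsto_one_div_atTop_nhds_zero_nat
    apply tendsto_of_tendsto_of_tendsto_of_le_of_le' hlow tendsto_const_nhds
    · filter_upwards [eventually_ge_atTop 1] with n hn
      have hn0 : (0:ℝ) < n := by exact_mod_cast hn
      have h2 : p⁻¹ * n - 1 ≤ ((⌊p⁻¹ * n⌋₊ : ℕ) : ℝ) := (Nat.sub_one_lt_floor _).le
      have heq : p⁻¹ - 1/(n:ℝ) = (p⁻¹ * n - 1)/n := by field_simp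
      rw [heq]
      gcongr
    · filter_upwards [eventually_ge_atTop 1] with n hn
      have hn0 : (0:ℝ) < n := by exact_mod_cast hn
      rw [div_le_iff₀ hn0]
      exact Nat.floor_le (by positivity)
  have hfrac : Tendsto (fun n : ℕ => (cnt ⌊p⁻¹ * n⌋₊ : ℝ) / n) atTop (nhds 1) := by
    have hmul := hcomp.mul hMdiv
    rw [mul_inv_cancel₀ (ne_of_gt hp0)] at hmul
    apply hmul.congr'
    filter_upwards [eventually_ge_atTop 1] with n hn
    have hn0 : (0:ℝ) < n := by exact_mod_cast hn
    have hM0 : ((⌊p⁻¹ * n⌋₊ : ℕ) : ℝ) ≠ 0 := by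
      have : (0:ℝ) < ((⌊p⁻¹ * n⌋₊ : ℕ) : ℝ) := by exact_mod_cast lt_of_lt_of_le hn (hMge n)
      exact this.ne'
    rw [div_mul_div_comm,
      mul_comm ((cnt ⌊p⁻¹ * (n:ℝ)⌋₊ : ℕ) : ℝ) ((⌊p⁻¹ * (n:ℝ)⌋₊ : ℕ) : ℝ),
      mul_div_mul_left _ _ hM0]
  have hminlim : Tendsto (fun n : ℕ => min 1 ((cnt ⌊p⁻¹ * n⌋₊ : ℝ) / n)) atTop (nhds 1) := by
    have := (tendsto_const_nhds (x := (1:ℝ)) (f := atTop)).min hfrac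
    simpa using this
  apply tendsto_of_tendsto_of_tendsto_of_le_of_le' hminlim tendsto_const_nhds
  · filter_upwards [eventually_ge_atTop 1] with n hn
    have hn0 : (0:ℝ) < n := by exact_mod_cast hn
    have hg := SoftEdge.greedy_path (fun v => X v ω) ⌊p⁻¹ * n⌋₊ n
    have hg' : ((min n (cnt ⌊p⁻¹ * n⌋₊) : ℕ) : ℝ)
        ≤ ((LIP (fun v => X v ω = true) ⌊p⁻¹ * n⌋₊ n : ℕ) : ℝ) := by exact_mod_cast hg
    have heq : min (1:ℝ) ((cnt ⌊p⁻¹ * n⌋₊ : ℝ) / n)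
        = ((min n (cnt ⌊p⁻¹ * n⌋₊) : ℕ) : ℝ) / n := by
      rw [Nat.cast_min, ← min_div_div_right hn0.le, div_self hn0.ne']
    rw [heq]
    gcongr
  · filter_upwards [eventually_ge_atTop 1] with n hn
    have hn0 : (0:ℝ) < n := by exact_mod_cast hn
    rw [div_le_one hn0]
    exact_mod_cast SoftEdge.LIP_le (fun v => X v ω = true) ⌊p⁻¹ * n⌋₊ n
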